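/- Let s > 0 and define F(r) := ν₂(S₀(s) ∩ B(0,r))/s², the CDF of the nearest distance from the origin to a random shifted grid of spacing s. Then F is differentiable with derivative F′(r) = 2π r/s² at every r ∈ (0, s/2), and differentiable with derivative F′(r) = 2π r/s² − (8r/s²)·arccos(s/(2r)) at every r ∈ (s/2, s/√2). In particular the nearest grid distance R_g has probability density f_{R_g}(r) = 2π r s^{−2} for 0 ≤ r ≤ s/2, f_{R_g}(r) = 2π r s^{−2} − (8r/s²) arccos(s/(2r)) for s/2 < r ≤ s/√2, and 0 otherwise. -/

import Mathlib

open MeasureTheory Real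

/-- The grid point `s·k = (s k₁, s k₂)` for `k ∈ ℤ²`. -/
noncomputable def gridPt (s : ℝ) (k : ℤ × ℤ) : EuclideanSpace ℝ (Fin 2) :=
  (WithLp.equiv 2 (Fin 2 → ℝ)).symm ![s * (k.1 : ℝ), s * (k.2 : ℝ)]

/-- The square `S₀(s) = [−s/2, s/2] × [−s/2, s/2]`. -/
def square (s : ℝ) : Set (EuclideanSpace ℝ (Fin 2)) :=
  {u | u 0 ∈ Set.Icc (-(s / 2)) (s / 2) ∧ u 1 ∈ Set.Icc (-(s / 2)) (s / 2)}

/-- The CDF `F(r) = ν₂(S₀(s) ∩ B(0,r))/s²` of the nearest grid distance. -/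
noncomputable def gridCDF (s r : ℝ) : ℝ :=
  (volume (square s ∩ Metric.closedBall (0 : EuclideanSpace ℝ (Fin 2)) r)).toReal / s ^ 2

/-- The density `f_{R_g}` of the nearest grid distance. -/
noncomputable def gridPDF (s r : ℝ) : ℝ :=
  if 0 ≤ r ∧ r ≤ s / 2 then 2 * π * r / s ^ 2
  else if s / 2 < r ∧ r ≤ s / Real.sqrt 2 then
    2 * π * r / s ^ 2 - 8 * r / s ^ 2 * Real.arccos (s / (2 * r))
  else 0

noncomputable def eE : EuclideanSpace ℝ (Fin 2) ≃ᵐ ℝ × ℝ :=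
  (MeasurableEquiv.toLp 2 (Fin 2 → ℝ)).symm.trans (MeasurableEquiv.finTwoArrow)

lemma eE_mp : MeasurePreserving eE :=
  (EuclideanSpace.volume_preserving_symm_measurableEquiv_toLp (Fin 2)).trans
    (volume_preserving_finTwoArrow ℝ)

lemma eE_apply (u : EuclideanSpace ℝ (Fin 2)) : eE u = (u 0, u 1) := rfl

example (u : EuclideanSpace ℝ (Fin 2)) : ‖u‖ = Real.sqrt (u 0 ^ 2 + u 1 ^ 2) := by
  rw [EuclideanSpace.norm_eq]
  simp [Fin.sum_univ_two, Real.norm_eq_abs, sq_abs]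

lemma norm_le_iff' {u : EuclideanSpace ℝ (Fin 2)} {r : ℝ} (hr : 0 ≤ r) :
    ‖u‖ ≤ r ↔ u 0 ^ 2 + u 1 ^ 2 ≤ r ^ 2 := by
  rw [show ‖u‖ = Real.sqrt (u 0 ^ 2 + u 1 ^ 2) by
    rw [EuclideanSpace.norm_eq]; simp [Fin.sum_univ_two, Real.norm_eq_abs, sq_abs]]
  rw [show r = Real.sqrt (r ^ 2) by rw [Real.sqrt_sq hr]]
  rw [Real.sqrt_le_sqrt_iff (by positivity), Real.sqrt_sq hr]

lemma square_preimage (s : ℝ) :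
    square s = eE ⁻¹' (Set.Icc (-(s/2)) (s/2) ×ˢ Set.Icc (-(s/2)) (s/2)) := rfl

lemma volume_square (s : ℝ) (hs : 0 < s) : volume (square s) = ENNReal.ofReal (s ^ 2) := by
  rw [square_preimage, eE_mp.measure_preimage
    ((measurableSet_Icc.prod measurableSet_Icc).nullMeasurableSet)]
  rw [show (volume : Measure (ℝ × ℝ)) = (volume : Measure ℝ).prod volume from rfl]
  rw [Measure.prod_prod, Real.volume_Icc, ← ENNReal.ofReal_mul (by linarith)]
  ring_nf

/-- the cartesian version of square ∩ ball -/
def Tset (s r : ℝ) : Set (ℝ × ℝ) :=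
  {p | p.1 ∈ Set.Icc (-(s/2)) (s/2) ∧ p.2 ∈ Set.Icc (-(s/2)) (s/2) ∧ p.1 ^ 2 + p.2 ^ 2 ≤ r ^ 2}

lemma inter_preimage (s r : ℝ) (hr : 0 ≤ r) :
    square s ∩ Metric.closedBall (0 : EuclideanSpace ℝ (Fin 2)) r = eE ⁻¹' (Tset s r) := by
  ext u
  simp only [Set.mem_inter_iff, Metric.mem_closedBall, dist_zero_right, Set.mem_preimage,
    Tset, Set.mem_setOf_eq, square, eE_apply, norm_le_iff' hr]
  tauto

lemma Tset_measurable (s r : ℝ) : MeasurableSet (Tset s r) := by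
  have h1 : Tset s r = (Prod.fst ⁻¹' Set.Icc (-(s/2)) (s/2)) ∩
      ((Prod.snd ⁻¹' Set.Icc (-(s/2)) (s/2)) ∩ {p : ℝ × ℝ | p.1 ^ 2 + p.2 ^ 2 ≤ r ^ 2}) := by
    ext p; simp [Tset, Set.mem_setOf_eq, and_assoc]
  rw [h1]
  refine (measurableSet_Icc.preimage measurable_fst).inter
    ((measurableSet_Icc.preimage measurable_snd).inter ?_)
  exact measurableSet_le (by fun_prop) measurable_const

lemma sliceEq (s r x : ℝ) (hx : x ∈ Set.Icc (-(s/2)) (s/2)) (hxr : x ^ 2 ≤ r ^ 2) :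
    Prod.mk x ⁻¹' Tset s r =
      Set.Icc (-(min (s/2) (Real.sqrt (r^2 - x^2)))) (min (s/2) (Real.sqrt (r^2 - x^2))) := by
  have hc : (0:ℝ) ≤ r^2 - x^2 := by linarith
  ext y
  simp only [Set.mem_preimage, Tset, Set.mem_setOf_eq, Set.mem_Icc, hx, true_and]
  have h2 : x^2 + y^2 ≤ r^2 ↔ y^2 ≤ r^2 - x^2 := by constructor <;> intro <;> linarith
  rw [h2, Real.sq_le hc]
  obtain ⟨hx1, hx2⟩ := hx
  constructor
  · rintro ⟨-, ⟨ha, hb⟩, hc1, hc2⟩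
    exact ⟨by rw [neg_le]; exact le_min (by linarith) (by linarith), le_min hb hc2⟩
  · rintro ⟨ha, hb⟩
    rw [neg_le, le_min_iff] at ha
    rw [le_min_iff] at hb
    exact ⟨⟨hx1, hx2⟩, ⟨by linarith [ha.1], hb.1⟩, by linarith [ha.2], hb.2⟩

lemma slice_empty (s r x : ℝ) (hx : x ∉ Set.Icc (-(s/2)) (s/2)) :
    Prod.mk x ⁻¹' Tset s r = ∅ := by
  ext y; simp only [Set.mem_preimage, Tset, Set.mem_setOf_eq, Set.mem_empty_iff_false, iff_false]
  intro h; exact hx h.1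

lemma volume_Tset (s r : ℝ) (hs : 0 < s) (hr : s/2 ≤ r) :
    volume (Tset s r) = ENNReal.ofReal
      (∫ x in (-(s/2))..(s/2), 2 * min (s/2) (Real.sqrt (r^2 - x^2))) := by
  have hsq : ∀ x ∈ Set.Icc (-(s/2)) (s/2), x ^ 2 ≤ r ^ 2 := by
    intro x hx
    rw [Set.mem_Icc] at hx
    nlinarith [hx.1, hx.2]
  have hcont : Continuous fun x : ℝ => 2 * min (s/2) (Real.sqrt (r^2 - x^2)) := by
    fun_prop
  have hnn : ∀ x, 0 ≤ 2 * min (s/2) (Real.sqrt (r^2 - x^2)) := by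
    intro x
    have := Real.sqrt_nonneg (r^2 - x^2)
    have : (0:ℝ) ≤ min (s/2) (Real.sqrt (r^2 - x^2)) := le_min (by linarith) (by linarith)
    linarith
  rw [show (volume : Measure (ℝ × ℝ)) = (volume : Measure ℝ).prod volume from rfl]
  rw [Measure.prod_apply (Tset_measurable s r)]
  have hslice : ∀ x : ℝ, volume (Prod.mk x ⁻¹' Tset s r) =
      Set.indicator (Set.Icc (-(s/2)) (s/2))
        (fun x => ENNReal.ofReal (2 * min (s/2) (Real.sqrt (r^2 - x^2)))) x := by
    intro x
    by_cases hx : x ∈ Set.Icc (-(s/2)) (s/2)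
    · rw [sliceEq s r x hx (hsq x hx), Set.indicator_of_mem hx, Real.volume_Icc]
      congr 1
      ring
    · rw [slice_empty s r x hx, Set.indicator_of_notMem hx, measure_empty]
  simp_rw [hslice]
  rw [lintegral_indicator measurableSet_Icc]
  rw [← ofReal_integral_eq_lintegral_ofReal
    (hcont.integrableOn_Icc) (Filter.Eventually.of_forall fun x => hnn x)]
  rw [intervalIntegral.integral_of_le (by linarith : -(s/2) ≤ s/2),
    ← MeasureTheory.integral_Icc_eq_integral_Ioc]

lemma psi_deriv (r : ℝ) (hr : 0 < r) (x : ℝ) (hx : |x| < r) :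
    HasDerivAt (fun x => (x * Real.sqrt (r^2 - x^2) + r^2 * Real.arcsin (x/r)) / 2)
      (Real.sqrt (r^2 - x^2)) x := by
  have hx' := abs_lt.mp hx
  have h1 : 0 < r^2 - x^2 := by nlinarith
  have hs0 : 0 < Real.sqrt (r^2 - x^2) := Real.sqrt_pos.mpr h1
  have hinner : HasDerivAt (fun x : ℝ => r^2 - x^2) (-(2*x)) x := by
    simpa using (hasDerivAt_pow 2 x).const_sub (r^2)
  have hsq : HasDerivAt (fun x => Real.sqrt (r^2 - x^2))
      (1 / (2 * Real.sqrt (r^2 - x^2)) * (-(2*x))) x :=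
    (Real.hasDerivAt_sqrt h1.ne').comp x hinner
  have hxr1 : x / r ≠ -1 := by
    intro h
    have : x = -r := by field_simp at h; linarith
    rw [this] at hx; rw [abs_neg, abs_of_pos hr] at hx; linarith
  have hxr2 : x / r ≠ 1 := by
    intro h
    have : x = r := by field_simp at h; exact h
    rw [this] at hx; rw [abs_of_pos hr] at hx; linarith
  have harc : HasDerivAt (fun x => Real.arcsin (x/r))
      (1 / Real.sqrt (1 - (x/r)^2) * (1/r)) x := by
    have := (Real.hasDerivAt_arcsin hxr1 hxr2).comp x ((hasDerivAt_id x).div_const r)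
    exact this
  have hrs : Real.sqrt (1 - (x/r)^2) = Real.sqrt (r^2 - x^2) / r := by
    rw [show 1 - (x/r)^2 = (r^2 - x^2) / r^2 by field_simp,
      Real.sqrt_div h1.le, Real.sqrt_sq hr.le]
  have htot := (((hasDerivAt_id x).mul hsq).add ((hasDerivAt_const x (r^2)).mul harc)).div_const 2
  refine htot.congr_deriv (Eq.symm ?_)
  rw [hrs]
  have hS2 : Real.sqrt (r^2 - x^2) ^ 2 = r^2 - x^2 := Real.sq_sqrt h1.le
  field_simp
  simp only [id_eq]
  linear_combination hS2

lemma sqrt_two_pos : (0:ℝ) < Real.sqrt 2 := Real.sqrt_pos.mpr (by norm_num)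

set_option maxHeartbeats 1000000 in
lemma integral_min_eval (s r : ℝ) (hs : 0 < s) (hr1 : s/2 < r) (hr2 : r ≤ s / Real.sqrt 2) :
    ∫ x in (-(s/2))..(s/2), 2 * min (s/2) (Real.sqrt (r^2 - x^2))
      = π * r^2 - 4 * r^2 * Real.arccos (s/(2*r)) + s * Real.sqrt (4*r^2 - s^2) := by
  have hr0 : 0 < r := lt_trans (by linarith) hr1
  have hrsq : r^2 ≤ s^2/2 := by
    have h2 : (0:ℝ) < Real.sqrt 2 := sqrt_two_pos
    have hkey : r * Real.sqrt 2 ≤ s := (le_div_iff₀ h2).mp hr2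
    have hsq : (r * Real.sqrt 2)^2 ≤ s^2 := pow_le_pow_left₀ (by positivity) hkey 2
    have h22 : Real.sqrt 2 ^ 2 = 2 := Real.sq_sqrt (by norm_num)
    nlinarith
  have hd : (0:ℝ) < r^2 - (s/2)^2 := by nlinarith
  set a := Real.sqrt (r^2 - (s/2)^2) with ha_def
  have ha2 : a^2 = r^2 - (s/2)^2 := Real.sq_sqrt hd.le
  have ha0 : 0 ≤ a := Real.sqrt_nonneg _
  have has : a ≤ s/2 := by
    rw [ha_def, show r^2 - (s/2)^2 = (s/2)^2 - (s^2/2 - r^2) by ring]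
    calc Real.sqrt ((s/2)^2 - (s^2/2 - r^2)) ≤ Real.sqrt ((s/2)^2) :=
          Real.sqrt_le_sqrt (by linarith)
      _ = s/2 := Real.sqrt_sq (by linarith)
  have haltr : a < r := by nlinarith
  have hcont : Continuous fun x : ℝ => 2 * min (s/2) (Real.sqrt (r^2 - x^2)) := by fun_prop
  have hint : ∀ u v : ℝ, IntervalIntegrable
      (fun x => 2 * min (s/2) (Real.sqrt (r^2 - x^2))) volume u v :=
    fun u v => hcont.intervalIntegrable u v
  -- the右 piece
  have hRsqrt : ∫ x in a..(s/2), 2 * min (s/2) (Real.sqrt (r^2 - x^2))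
      = ∫ x in a..(s/2), 2 * Real.sqrt (r^2 - x^2) := by
    apply intervalIntegral.integral_congr
    intro x hx
    rw [Set.uIcc_of_le has] at hx
    obtain ⟨h1, h2⟩ := hx
    have hx2 : a^2 ≤ x^2 := by nlinarith
    have : Real.sqrt (r^2 - x^2) ≤ s/2 := by
      calc Real.sqrt (r^2 - x^2) ≤ Real.sqrt ((s/2)^2) := Real.sqrt_le_sqrt (by nlinarith)
        _ = s/2 := Real.sqrt_sq (by linarith)
    simp [min_eq_right this]
  have hft : ∫ x in a..(s/2), Real.sqrt (r^2 - x^2)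
      = ((s/2) * Real.sqrt (r^2 - (s/2)^2) + r^2 * Real.arcsin ((s/2)/r)) / 2
        - (a * Real.sqrt (r^2 - a^2) + r^2 * Real.arcsin (a/r)) / 2 := by
    apply intervalIntegral.integral_eq_sub_of_hasDerivAt
      (f := fun x => (x * Real.sqrt (r^2 - x^2) + r^2 * Real.arcsin (x/r)) / 2)
    · intro x hx
      rw [Set.uIcc_of_le has] at hx
      apply psi_deriv r hr0
      rw [abs_lt]
      constructor <;> [linarith [hx.1]; linarith [hx.2]]
    · exact (by fun_prop : Continuous fun x : ℝ => Real.sqrt (r^2 - x^2)).intervalIntegrable _ _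
  have harcsin_a : Real.arcsin (a/r) = Real.arccos (s/(2*r)) := by
    rw [Real.arccos_eq_arcsin (by positivity)]
    congr 1
    rw [show 1 - (s/(2*r))^2 = (r^2 - (s/2)^2)/r^2 by field_simp,
      Real.sqrt_div hd.le, Real.sqrt_sq hr0.le]
  have harcsin_s : Real.arcsin ((s/2)/r) = π/2 - Real.arccos (s/(2*r)) := by
    rw [Real.arccos, show (s/2)/r = s/(2*r) by ring]
    ring
  have hsqa : Real.sqrt (r^2 - a^2) = s/2 := by
    rw [ha2, show r^2 - (r^2 - (s/2)^2) = (s/2)^2 by ring, Real.sqrt_sq (by linarith)]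
  have hR : ∫ x in a..(s/2), 2 * min (s/2) (Real.sqrt (r^2 - x^2))
      = r^2 * (π/2 - 2 * Real.arccos (s/(2*r))) := by
    rw [hRsqrt, intervalIntegral.integral_const_mul, hft, ← ha_def, hsqa, harcsin_a, harcsin_s]
    ring
  -- the middle piece
  have hM : ∫ x in (-a)..a, 2 * min (s/2) (Real.sqrt (r^2 - x^2)) = 2 * a * s := by
    rw [show (2:ℝ) * a * s = (a - (-a)) • s by rw [smul_eq_mul]; ring,
      ← intervalIntegral.integral_const]
    apply intervalIntegral.integral_congr
    intro x hx
    rw [Set.uIcc_of_le (by linarith)] at hx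
    obtain ⟨h1, h2⟩ := hx
    have hx2 : x^2 ≤ a^2 := by nlinarith
    have : s/2 ≤ Real.sqrt (r^2 - x^2) := by
      rw [show s/2 = Real.sqrt ((s/2)^2) from (Real.sqrt_sq (by linarith)).symm]
      exact Real.sqrt_le_sqrt (by nlinarith)
    show 2 * min (s/2) (Real.sqrt (r^2 - x^2)) = s
    rw [min_eq_left this]
    ring
  -- the left piece
  have hL : ∫ x in (-(s/2))..(-a), 2 * min (s/2) (Real.sqrt (r^2 - x^2))
      = r^2 * (π/2 - 2 * Real.arccos (s/(2*r))) := by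
    have hneg := intervalIntegral.integral_comp_neg (a := a) (b := s/2)
      (fun x => 2 * min (s/2) (Real.sqrt (r^2 - x^2)))
    rw [← hneg, ← hR]
    apply intervalIntegral.integral_congr
    intro x _
    show 2 * min (s/2) (Real.sqrt (r^2 - (-x)^2)) = 2 * min (s/2) (Real.sqrt (r^2 - x^2))
    rw [neg_sq]
  have hsplit : ∫ x in (-(s/2))..(s/2), 2 * min (s/2) (Real.sqrt (r^2 - x^2))
      = (∫ x in (-(s/2))..(-a), 2 * min (s/2) (Real.sqrt (r^2 - x^2)))
        + ((∫ x in (-a)..a, 2 * min (s/2) (Real.sqrt (r^2 - x^2)))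
          + ∫ x in a..(s/2), 2 * min (s/2) (Real.sqrt (r^2 - x^2))) := by
    have e1 := intervalIntegral.integral_add_adjacent_intervals (a := -(s/2)) (b := -a)
      (c := s/2) (hint _ _) (hint _ _)
    have e2 := intervalIntegral.integral_add_adjacent_intervals (a := -a) (b := a)
      (c := s/2) (hint _ _) (hint _ _)
    rw [e2, e1]
  have h2a : Real.sqrt (4*r^2 - s^2) = 2 * a := by
    rw [show 4*r^2 - s^2 = (2*a)^2 by nlinarith, Real.sqrt_sq (by linarith)]
  rw [hsplit, hL, hM, hR, h2a]
  ring

lemma abs_coord_le_norm (u : EuclideanSpace ℝ (Fin 2)) (i : Fin 2) : |u i| ≤ ‖u‖ := by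
  have h : ‖u‖ = Real.sqrt (u 0 ^ 2 + u 1 ^ 2) := by
    rw [EuclideanSpace.norm_eq]; simp [Fin.sum_univ_two, Real.norm_eq_abs, sq_abs]
  rw [h, show |u i| = Real.sqrt ((u i)^2) from (Real.sqrt_sq_eq_abs _).symm]
  apply Real.sqrt_le_sqrt
  fin_cases i <;> simp <;> positivity

lemma volume_inter_low (s r : ℝ) (hs : 0 < s) (hr0 : 0 ≤ r) (hr : r ≤ s/2) :
    volume (square s ∩ Metric.closedBall (0 : EuclideanSpace ℝ (Fin 2)) r)
      = ENNReal.ofReal (π * r^2) := by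
  have hsub : Metric.closedBall (0 : EuclideanSpace ℝ (Fin 2)) r ⊆ square s := by
    intro u hu
    rw [Metric.mem_closedBall, dist_zero_right] at hu
    constructor <;> rw [Set.mem_Icc, ← abs_le] <;>
      [exact le_trans (abs_coord_le_norm u 0) (by linarith);
       exact le_trans (abs_coord_le_norm u 1) (by linarith)]
  rw [Set.inter_eq_self_of_subset_right hsub, EuclideanSpace.volume_closedBall]
  simp only [Fintype.card_fin]
  rw [show (((2:ℕ):ℝ)/2 + 1) = 2 by norm_num, Real.Gamma_two]
  rw [show Real.sqrt π ^ 2 / 1 = π by rw [Real.sq_sqrt Real.pi_pos.le]; ring]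
  rw [← ENNReal.ofReal_pow hr0, ← ENNReal.ofReal_mul (by positivity)]
  ring_nf

lemma volume_inter_mid (s r : ℝ) (hs : 0 < s) (hr1 : s/2 < r) (hr2 : r ≤ s / Real.sqrt 2) :
    volume (square s ∩ Metric.closedBall (0 : EuclideanSpace ℝ (Fin 2)) r)
      = ENNReal.ofReal (π * r^2 - 4 * r^2 * Real.arccos (s/(2*r)) + s * Real.sqrt (4*r^2 - s^2)) := by
  rw [inter_preimage s r (by linarith), eE_mp.measure_preimage (Tset_measurable s r).nullMeasurableSet,
    volume_Tset s r hs hr1.le, integral_min_eval s r hs hr1 hr2]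

lemma volume_inter_high (s r : ℝ) (hs : 0 < s) (hr : s / Real.sqrt 2 ≤ r) :
    volume (square s ∩ Metric.closedBall (0 : EuclideanSpace ℝ (Fin 2)) r)
      = ENNReal.ofReal (s^2) := by
  have hr0 : 0 ≤ r := le_trans (by positivity) hr
  have hr2 : s^2/2 ≤ r^2 := by
    have h2 : (0:ℝ) < Real.sqrt 2 := sqrt_two_pos
    have hkey : s ≤ r * Real.sqrt 2 := by
      rw [div_le_iff₀ h2] at hr; linarith
    have := pow_le_pow_left₀ (by positivity) hkey 2
    have h22 : Real.sqrt 2 ^ 2 = 2 := Real.sq_sqrt (by norm_num)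
    nlinarith
  have hsub : square s ⊆ Metric.closedBall (0 : EuclideanSpace ℝ (Fin 2)) r := by
    intro u hu
    obtain ⟨h0, h1⟩ := hu
    rw [Set.mem_Icc] at h0 h1
    rw [Metric.mem_closedBall, dist_zero_right, norm_le_iff' hr0]
    nlinarith [h0.1, h0.2, h1.1, h1.2]
  rw [Set.inter_eq_self_of_subset_left hsub, volume_square s hs]

lemma gridCDF_neg (s r : ℝ) (hr : r < 0) : gridCDF s r = 0 := by
  rw [gridCDF, Metric.closedBall_eq_empty.mpr hr, Set.inter_empty, measure_empty]
  simp

lemma gridCDF_low (s r : ℝ) (hs : 0 < s) (hr0 : 0 ≤ r) (hr : r ≤ s/2) :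
    gridCDF s r = π * r^2 / s^2 := by
  rw [gridCDF, volume_inter_low s r hs hr0 hr, ENNReal.toReal_ofReal (by positivity)]

lemma gridCDF_mid (s r : ℝ) (hs : 0 < s) (hr1 : s/2 < r) (hr2 : r ≤ s / Real.sqrt 2) :
    gridCDF s r = (π * r^2 - 4 * r^2 * Real.arccos (s/(2*r)) + s * Real.sqrt (4*r^2 - s^2)) / s^2 := by
  rw [gridCDF, volume_inter_mid s r hs hr1 hr2, ENNReal.toReal_ofReal]
  have h := volume_inter_mid s r hs hr1 hr2
  by_contra hneg
  push_neg at hneg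
  rw [ENNReal.ofReal_eq_zero.mpr hneg.le] at h
  have h2 := volume_inter_low s (s/2) hs (by linarith) le_rfl
  have hmono : volume (square s ∩ Metric.closedBall (0 : EuclideanSpace ℝ (Fin 2)) (s/2))
      ≤ volume (square s ∩ Metric.closedBall (0 : EuclideanSpace ℝ (Fin 2)) r) :=
    measure_mono (Set.inter_subset_inter_right _ (Metric.closedBall_subset_closedBall hr1.le))
  rw [h, h2] at hmono
  simp only [nonpos_iff_eq_zero, ENNReal.ofReal_eq_zero] at hmono
  have hpos : 0 < π * (s/2)^2 := mul_pos Real.pi_pos (pow_pos (half_pos hs) 2)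
  linarith

lemma gridCDF_high (s r : ℝ) (hs : 0 < s) (hr : s / Real.sqrt 2 ≤ r) : gridCDF s r = 1 := by
  rw [gridCDF, volume_inter_high s r hs hr, ENNReal.toReal_ofReal (by positivity)]
  field_simp

lemma hasDerivAt_H (s r : ℝ) (hs : 0 < s) (hr1 : s/2 < r) :
    HasDerivAt (fun x => (π * x^2 - 4*x^2*Real.arccos (s/(2*x)) + s*Real.sqrt (4*x^2 - s^2))/s^2)
      (2*π*r/s^2 - 8*r/s^2 * Real.arccos (s/(2*r))) r := by
  have hr0 : 0 < r := lt_trans (by linarith) hr1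
  have hq : 0 < 4*r^2 - s^2 := by nlinarith
  set S := Real.sqrt (4*r^2 - s^2) with hS_def
  have hS2 : S^2 = 4*r^2 - s^2 := Real.sq_sqrt hq.le
  have hS0 : 0 < S := Real.sqrt_pos.mpr hq
  have hc1 : s/(2*r) ≠ -1 := by
    have : 0 < s/(2*r) := by positivity
    linarith
  have hc2 : s/(2*r) ≠ 1 := by
    have : s/(2*r) < 1 := by rw [div_lt_one (by linarith)]; linarith
    linarith
  have harg : HasDerivAt (fun x : ℝ => s/(2*x)) (s/2 * (-(r^2)⁻¹)) r := by
    have h := (hasDerivAt_inv hr0.ne').const_mul (s/2)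
    have hfun : (fun x : ℝ => s/(2*x)) = fun x : ℝ => s/2 * x⁻¹ := by
      funext x; rw [div_eq_mul_inv, div_eq_mul_inv, mul_inv]; ring
    rw [hfun]; exact h
  have harccos : HasDerivAt (fun x => Real.arccos (s/(2*x)))
      (-(1 / Real.sqrt (1 - (s/(2*r))^2)) * (s/2 * (-(r^2)⁻¹))) r :=
    by have := (Real.hasDerivAt_arccos hc1 hc2).comp r harg; exact this
  have hsqin : HasDerivAt (fun x : ℝ => 4*x^2 - s^2) (4*(2*r)) r := by
    simpa using ((hasDerivAt_pow 2 r).const_mul 4).sub_const (s^2)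
  have hsqrt : HasDerivAt (fun x => Real.sqrt (4*x^2 - s^2))
      (1/(2*S) * (4*(2*r))) r :=
    (Real.hasDerivAt_sqrt hq.ne').comp r hsqin
  have hx2 : HasDerivAt (fun x : ℝ => π * x^2) (π * (2*r)) r := by
    simpa using (hasDerivAt_pow 2 r).const_mul π
  have h4x2 : HasDerivAt (fun x : ℝ => 4 * x^2) (4 * (2*r)) r := by
    simpa using (hasDerivAt_pow 2 r).const_mul 4
  have hprod : HasDerivAt (fun x : ℝ => 4*x^2 * Real.arccos (s/(2*x)))
      (4*(2*r) * Real.arccos (s/(2*r))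
        + 4*r^2 * (-(1 / Real.sqrt (1 - (s/(2*r))^2)) * (s/2 * (-(r^2)⁻¹)))) r :=
    h4x2.mul harccos
  have htot := ((hx2.sub hprod).add (hsqrt.const_mul s)).div_const (s^2)
  refine htot.congr_deriv (Eq.symm ?_)
  have hrs : Real.sqrt (1 - (s/(2*r))^2) = S / (2*r) := by
    rw [show 1 - (s/(2*r))^2 = (4*r^2 - s^2) / (2*r)^2 by field_simp; ring,
      Real.sqrt_div hq.le, hS_def, Real.sqrt_sq (by linarith)]
  rw [hrs]
  field_simp
  ring

lemma half_lt_div_sqrt_two (s : ℝ) (hs : 0 < s) : s/2 < s / Real.sqrt 2 := by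
  have h2 : Real.sqrt 2 < 2 := by
    nlinarith [Real.sq_sqrt (by norm_num : (0:ℝ) ≤ 2), Real.sqrt_nonneg 2]
  exact div_lt_div_of_pos_left hs sqrt_two_pos h2

lemma gridCDF_hasDeriv_low (s : ℝ) (hs : 0 < s) (r : ℝ) (hr : r ∈ Set.Ioo 0 (s/2)) :
    HasDerivAt (gridCDF s) (2 * π * r / s ^ 2) r := by
  have hd : HasDerivAt (fun x : ℝ => π * x^2 / s^2) (2 * π * r / s ^ 2) r := by
    have := ((hasDerivAt_pow 2 r).const_mul π).div_const (s^2)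
    refine this.congr_deriv ?_
    ring
  apply hd.congr_of_eventuallyEq
  apply Filter.eventuallyEq_of_mem (isOpen_Ioo.mem_nhds hr)
  intro x hx
  exact gridCDF_low s x hs hx.1.le hx.2.le

lemma gridCDF_hasDeriv_mid (s : ℝ) (hs : 0 < s) (r : ℝ)
    (hr : r ∈ Set.Ioo (s/2) (s / Real.sqrt 2)) :
    HasDerivAt (gridCDF s)
      (2 * π * r / s ^ 2 - 8 * r / s ^ 2 * Real.arccos (s / (2 * r))) r := by
  have hd := hasDerivAt_H s r hs hr.1
  apply hd.congr_of_eventuallyEq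
  apply Filter.eventuallyEq_of_mem (isOpen_Ioo.mem_nhds hr)
  intro x hx
  exact gridCDF_mid s x hs hx.1 hx.2.le

lemma gridPDF_nonpos (s t : ℝ) (hs : 0 < s) (ht : t ≤ 0) : gridPDF s t = 0 := by
  rw [gridPDF]
  rcases lt_or_eq_of_le ht with h | h
  · rw [if_neg (by rintro ⟨h1, h2⟩; linarith), if_neg (by rintro ⟨h1, h2⟩; linarith)]
  · subst h
    rw [if_pos ⟨le_rfl, by linarith⟩]
    ring

lemma gridPDF_eq_g1 (s t : ℝ) (ht0 : 0 ≤ t) (hts : t ≤ s/2) : gridPDF s t = 2 * π * t / s ^ 2 :=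
  if_pos ⟨ht0, hts⟩

lemma gridPDF_eq_g2 (s t : ℝ) (hs : 0 < s) (ht1 : s/2 ≤ t) (ht2 : t ≤ s / Real.sqrt 2) :
    gridPDF s t = 2 * π * t / s ^ 2 - 8 * t / s ^ 2 * Real.arccos (s / (2 * t)) := by
  rcases eq_or_lt_of_le ht1 with h | h
  · rw [gridPDF, if_pos ⟨by linarith, h.symm.le⟩, ← h,
      show s / (2 * (s/2)) = 1 by field_simp, Real.arccos_one]
    ring
  · rw [gridPDF, if_neg (by rintro ⟨h1, h2⟩; linarith), if_pos ⟨h, ht2⟩]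

lemma gridPDF_eq_zero_high (s t : ℝ) (hs : 0 < s) (ht : s / Real.sqrt 2 < t) : gridPDF s t = 0 := by
  have := half_lt_div_sqrt_two s hs
  rw [gridPDF, if_neg (by rintro ⟨h1, h2⟩; linarith), if_neg (by rintro ⟨h1, h2⟩; linarith)]

lemma cont_g2 (s : ℝ) (hs : 0 < s) :
    ContinuousOn (fun t : ℝ => 2 * π * t / s ^ 2 - 8 * t / s ^ 2 * Real.arccos (s / (2 * t)))
      {t : ℝ | 0 < t} := by
  intro x hx
  have hx0 : (0:ℝ) < x := hx
  apply ContinuousAt.continuousWithinAt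
  have harg : ContinuousAt (fun t : ℝ => s / (2 * t)) x :=
    continuousAt_const.div (continuous_const.mul continuous_id).continuousAt (by simp; linarith)
  exact ((continuousAt_const.mul continuousAt_id).div continuousAt_const (by positivity)).sub
    ((((continuousAt_const.mul continuousAt_id).div continuousAt_const (by positivity)).mul
      (Real.continuous_arccos.continuousAt.comp harg)))

lemma cont_H (s : ℝ) (hs : 0 < s) :
    ContinuousOn (fun x : ℝ =>
        (π * x^2 - 4*x^2*Real.arccos (s/(2*x)) + s*Real.sqrt (4*x^2 - s^2))/s^2)
      {t : ℝ | 0 < t} := by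
  intro x hx
  have hx0 : (0:ℝ) < x := hx
  apply ContinuousAt.continuousWithinAt
  have harg : ContinuousAt (fun t : ℝ => s / (2 * t)) x :=
    continuousAt_const.div (continuous_const.mul continuous_id).continuousAt (by simp; linarith)
  apply ContinuousAt.div _ continuousAt_const (by positivity)
  apply ContinuousAt.add
  · apply ContinuousAt.sub
    · exact continuousAt_const.mul (continuousAt_pow x 2)
    · exact (continuousAt_const.mul (continuousAt_pow x 2)).mul
        (Real.continuous_arccos.continuousAt.comp harg)
  · exact continuousAt_const.mul (Real.continuous_sqrt.continuousAt.comp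
      (((continuousAt_const.mul (continuousAt_pow x 2)).sub continuousAt_const)))

lemma int_g1 (s r : ℝ) (hs : 0 < s) (hr0 : 0 ≤ r) (hr : r ≤ s/2) :
    ∫ t in (0:ℝ)..r, gridPDF s t = π * r^2 / s^2 := by
  have hcongr : ∫ t in (0:ℝ)..r, gridPDF s t = ∫ t in (0:ℝ)..r, 2 * π * t / s ^ 2 := by
    apply intervalIntegral.integral_congr
    intro t ht
    rw [Set.uIcc_of_le hr0] at ht
    exact gridPDF_eq_g1 s t ht.1 (le_trans ht.2 hr)
  rw [hcongr, show (fun t : ℝ => 2 * π * t / s ^ 2) = fun t : ℝ => (2 * π / s ^ 2) * t by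
    funext t; ring]
  rw [intervalIntegral.integral_const_mul, integral_id]
  ring

lemma int_mid (s r : ℝ) (hs : 0 < s) (hr1 : s/2 ≤ r) (hr2 : r ≤ s / Real.sqrt 2) :
    ∫ t in (0:ℝ)..r, gridPDF s t
      = (π * r^2 - 4*r^2*Real.arccos (s/(2*r)) + s*Real.sqrt (4*r^2 - s^2))/s^2 := by
  have h0 : (0:ℝ) < s/2 := by linarith
  have hints : IntervalIntegrable (gridPDF s) volume 0 (s/2) := by
    apply IntervalIntegrable.congr_ae (f := fun t => 2 * π * t / s ^ 2)
    · exact (by fun_prop : Continuous fun t : ℝ => 2 * π * t / s ^ 2).intervalIntegrable _ _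
    · rw [Filter.EventuallyEq, ae_restrict_iff' measurableSet_uIoc]
      apply Filter.Eventually.of_forall
      intro t ht
      rw [Set.uIoc_of_le h0.le] at ht
      exact (gridPDF_eq_g1 s t ht.1.le (le_trans ht.2 le_rfl)).symm
  have hcont2 : ContinuousOn
      (fun t : ℝ => 2 * π * t / s ^ 2 - 8 * t / s ^ 2 * Real.arccos (s / (2 * t)))
      (Set.Icc (s/2) r) := (cont_g2 s hs).mono (fun t ht => by
        simp only [Set.mem_setOf_eq]; linarith [ht.1])
  have hint2 : IntervalIntegrable (gridPDF s) volume (s/2) r := by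
    apply IntervalIntegrable.congr_ae
      (f := fun t : ℝ => 2 * π * t / s ^ 2 - 8 * t / s ^ 2 * Real.arccos (s / (2 * t)))
    · exact (hcont2.mono (by rw [Set.uIcc_of_le hr1])).intervalIntegrable
    · rw [Filter.EventuallyEq, ae_restrict_iff' measurableSet_uIoc]
      apply Filter.Eventually.of_forall
      intro t ht
      rw [Set.uIoc_of_le hr1] at ht
      exact (gridPDF_eq_g2 s t hs ht.1.le (le_trans ht.2 hr2)).symm
  rw [← intervalIntegral.integral_add_adjacent_intervals hints hint2]
  have hft : ∫ t in (s/2)..r, gridPDF s t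
      = (π * r^2 - 4*r^2*Real.arccos (s/(2*r)) + s*Real.sqrt (4*r^2 - s^2))/s^2
        - (π * (s/2)^2 - 4*(s/2)^2*Real.arccos (s/(2*(s/2)))
            + s*Real.sqrt (4*(s/2)^2 - s^2))/s^2 := by
    have hcongr : ∫ t in (s/2)..r, gridPDF s t
        = ∫ t in (s/2)..r, (2 * π * t / s ^ 2 - 8 * t / s ^ 2 * Real.arccos (s / (2 * t))) := by
      apply intervalIntegral.integral_congr
      intro t ht
      rw [Set.uIcc_of_le hr1] at ht
      exact gridPDF_eq_g2 s t hs ht.1 (le_trans ht.2 hr2)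
    rw [hcongr]
    apply intervalIntegral.integral_eq_sub_of_hasDeriv_right_of_le hr1
    · apply (cont_H s hs).mono
      intro t ht
      simp only [Set.mem_setOf_eq]
      linarith [ht.1]
    · intro x hx
      exact (hasDerivAt_H s x hs hx.1).hasDerivWithinAt
    · exact (hcont2.mono (by rw [Set.uIcc_of_le hr1])).intervalIntegrable
  rw [hft, int_g1 s (s/2) hs h0.le le_rfl,
    show s/(2*(s/2)) = 1 by field_simp, Real.arccos_one,
    show 4*(s/2)^2 - s^2 = 0 by ring, Real.sqrt_zero]
  ring

lemma arccos_sqrt2 : Real.arccos (Real.sqrt 2 / 2) = π/4 := by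
  rw [show Real.sqrt 2 / 2 = Real.sin (π/4) from (Real.sin_pi_div_four).symm,
    Real.arccos, Real.arcsin_sin (by linarith [Real.pi_pos]) (by linarith [Real.pi_pos])]
  ring

lemma int_pdf_eq_cdf (s r : ℝ) (hs : 0 < s) (hr0 : 0 ≤ r) :
    ∫ t in (0:ℝ)..r, gridPDF s t = gridCDF s r := by
  have hhalf := half_lt_div_sqrt_two s hs
  rcases le_or_gt r (s/2) with h1 | h1
  · rw [int_g1 s r hs hr0 h1, gridCDF_low s r hs hr0 h1]
  · rcases le_or_gt r (s / Real.sqrt 2) with h2 | h2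
    · rw [int_mid s r hs h1.le h2, gridCDF_mid s r hs h1 h2]
    · -- r beyond s/√2
      have ha : IntervalIntegrable (gridPDF s) volume 0 (s / Real.sqrt 2) := by
        have hints : IntervalIntegrable (gridPDF s) volume 0 (s/2) := by
          apply IntervalIntegrable.congr_ae (f := fun t => 2 * π * t / s ^ 2)
          · exact (by fun_prop : Continuous fun t : ℝ => 2 * π * t / s ^ 2).intervalIntegrable _ _
          · rw [Filter.EventuallyEq, ae_restrict_iff' measurableSet_uIoc]
            apply Filter.Eventually.of_forall
            intro t ht
            rw [Set.uIoc_of_le (by linarith : (0:ℝ) ≤ s/2)] at ht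
            exact (gridPDF_eq_g1 s t ht.1.le ht.2).symm
        have hint2 : IntervalIntegrable (gridPDF s) volume (s/2) (s / Real.sqrt 2) := by
          apply IntervalIntegrable.congr_ae
            (f := fun t : ℝ => 2 * π * t / s ^ 2 - 8 * t / s ^ 2 * Real.arccos (s / (2 * t)))
          · apply ContinuousOn.intervalIntegrable
            apply (cont_g2 s hs).mono
            intro t ht
            rw [Set.uIcc_of_le hhalf.le] at ht
            simp only [Set.mem_setOf_eq]
            linarith [ht.1]
          · rw [Filter.EventuallyEq, ae_restrict_iff' measurableSet_uIoc]
            apply Filter.Eventually.of_forall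
            intro t ht
            rw [Set.uIoc_of_le hhalf.le] at ht
            exact (gridPDF_eq_g2 s t hs ht.1.le ht.2).symm
        exact hints.trans hint2
      have hb : IntervalIntegrable (gridPDF s) volume (s / Real.sqrt 2) r := by
        apply IntervalIntegrable.congr_ae (f := fun _ : ℝ => (0:ℝ))
        · exact intervalIntegrable_const
        · rw [Filter.EventuallyEq, ae_restrict_iff' measurableSet_uIoc]
          apply Filter.Eventually.of_forall
          intro t ht
          rw [Set.uIoc_of_le h2.le] at ht
          exact (gridPDF_eq_zero_high s t hs ht.1).symm
      rw [← intervalIntegral.integral_add_adjacent_intervals ha hb]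
      have hzero : ∫ t in (s / Real.sqrt 2)..r, gridPDF s t = 0 := by
        rw [intervalIntegral.integral_of_le h2.le,
          MeasureTheory.setIntegral_congr_fun measurableSet_Ioc
            (g := fun _ => (0:ℝ)) (fun t ht => gridPDF_eq_zero_high s t hs ht.1)]
        simp
      have hmid := int_mid s (s / Real.sqrt 2) hs hhalf.le le_rfl
      rw [hzero, hmid, add_zero, gridCDF_high s r hs h2.le]
      have h22 : Real.sqrt 2 ^ 2 = 2 := Real.sq_sqrt (by norm_num)
      have hq : (s / Real.sqrt 2)^2 = s^2/2 := by rw [div_pow, h22]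
      have harg : s / (2 * (s / Real.sqrt 2)) = Real.sqrt 2 / 2 := by
        rw [div_eq_div_iff (by positivity) (by norm_num)]
        field_simp
      rw [harg, arccos_sqrt2, hq, show 4*(s^2/2) - s^2 = s^2 by ring, Real.sqrt_sq hs.le]
      field_simp
      ring

lemma pdf_ii (s : ℝ) (hs : 0 < s) (r : ℝ) (hr : 0 ≤ r) :
    IntervalIntegrable (gridPDF s) volume 0 r := by
  have hhalf := half_lt_div_sqrt_two s hs
  have aux1 : ∀ u v : ℝ, 0 ≤ u → u ≤ v → v ≤ s/2 →
      IntervalIntegrable (gridPDF s) volume u v := by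
    intro u v hu huv hv
    apply IntervalIntegrable.congr_ae (f := fun t => 2 * π * t / s ^ 2)
    · exact (by fun_prop : Continuous fun t : ℝ => 2 * π * t / s ^ 2).intervalIntegrable _ _
    · rw [Filter.EventuallyEq, ae_restrict_iff' measurableSet_uIoc]
      apply Filter.Eventually.of_forall
      intro t ht
      rw [Set.uIoc_of_le huv] at ht
      exact (gridPDF_eq_g1 s t (le_trans hu ht.1.le) (le_trans ht.2 hv)).symm
  have aux2 : ∀ u v : ℝ, s/2 ≤ u → u ≤ v → v ≤ s / Real.sqrt 2 →
      IntervalIntegrable (gridPDF s) volume u v := by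
    intro u v hu huv hv
    apply IntervalIntegrable.congr_ae
      (f := fun t : ℝ => 2 * π * t / s ^ 2 - 8 * t / s ^ 2 * Real.arccos (s / (2 * t)))
    · apply ContinuousOn.intervalIntegrable
      apply (cont_g2 s hs).mono
      intro t ht
      rw [Set.uIcc_of_le huv] at ht
      simp only [Set.mem_setOf_eq]
      linarith [ht.1]
    · rw [Filter.EventuallyEq, ae_restrict_iff' measurableSet_uIoc]
      apply Filter.Eventually.of_forall
      intro t ht
      rw [Set.uIoc_of_le huv] at ht
      exact (gridPDF_eq_g2 s t hs (le_trans hu ht.1.le) (le_trans ht.2 hv)).symm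
  have aux3 : ∀ u v : ℝ, s / Real.sqrt 2 ≤ u → u ≤ v →
      IntervalIntegrable (gridPDF s) volume u v := by
    intro u v hu huv
    apply IntervalIntegrable.congr_ae (f := fun _ : ℝ => (0:ℝ))
    · exact intervalIntegrable_const
    · rw [Filter.EventuallyEq, ae_restrict_iff' measurableSet_uIoc]
      apply Filter.Eventually.of_forall
      intro t ht
      rw [Set.uIoc_of_le huv] at ht
      exact (gridPDF_eq_zero_high s t hs (lt_of_le_of_lt hu ht.1)).symm
  rcases le_or_gt r (s/2) with h1 | h1
  · exact aux1 0 r le_rfl hr h1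
  · rcases le_or_gt r (s / Real.sqrt 2) with h2 | h2
    · exact (aux1 0 (s/2) le_rfl (by linarith) le_rfl).trans (aux2 (s/2) r le_rfl h1.le h2)
    · exact ((aux1 0 (s/2) le_rfl (by linarith) le_rfl).trans
        (aux2 (s/2) (s / Real.sqrt 2) le_rfl hhalf.le le_rfl)).trans
        (aux3 (s / Real.sqrt 2) r le_rfl h2.le)

lemma setIntegral_Iic_pdf (s r : ℝ) (hs : 0 < s) :
    ∫ t in Set.Iic r, gridPDF s t = gridCDF s r := by
  rcases le_or_gt r 0 with h | h
  · rw [MeasureTheory.setIntegral_congr_fun measurableSet_Iic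
      (g := fun _ => (0:ℝ)) (fun t ht => gridPDF_nonpos s t hs (le_trans ht h)), integral_zero]
    rcases lt_or_eq_of_le h with h' | h'
    · exact (gridCDF_neg s r h').symm
    · rw [h', gridCDF_low s 0 hs le_rfl (by linarith)]
      ring
  · have hIic : Set.Iic r = Set.Iic 0 ∪ Set.Ioc 0 r := (Set.Iic_union_Ioc_eq_Iic h.le).symm
    have hint1 : IntegrableOn (gridPDF s) (Set.Iic 0) volume := by
      apply Integrable.congr (integrable_zero _ _ _)
      rw [Filter.EventuallyEq, ae_restrict_iff' measurableSet_Iic]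
      exact Filter.Eventually.of_forall fun t ht => (gridPDF_nonpos s t hs ht).symm
    have hint2 : IntegrableOn (gridPDF s) (Set.Ioc 0 r) volume :=
      (pdf_ii s hs r h.le).1
    rw [hIic, MeasureTheory.setIntegral_union (Set.Iic_disjoint_Ioc le_rfl)
      measurableSet_Ioc hint1 hint2]
    rw [MeasureTheory.setIntegral_congr_fun measurableSet_Iic
      (g := fun _ => (0:ℝ)) (fun t ht => gridPDF_nonpos s t hs ht), integral_zero]
    rw [← intervalIntegral.integral_of_le h.le, int_pdf_eq_cdf s r hs h.le]
    ring

lemma gridPt_apply (s : ℝ) (k : ℤ × ℤ) :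
    gridPt s k 0 = s * k.1 ∧ gridPt s k 1 = s * k.2 := ⟨rfl, rfl⟩

lemma coord_sq_le (s z : ℝ) (hs : 0 < s) (hz : |z| ≤ s/2) (k : ℤ) : z^2 ≤ (s*k + z)^2 := by
  rcases eq_or_ne k 0 with h | h
  · subst h; simp
  · have h1 : (1:ℝ) ≤ |(k:ℝ)| := by
      rw [← Int.cast_abs]
      exact_mod_cast Int.one_le_abs h
    have h2 : s ≤ |s*k| := by
      rw [abs_mul, abs_of_pos hs]
      nlinarith
    have h3 : |s*k| - |z| ≤ |s*k + z| := by
      have := abs_add_le (s*(k:ℝ) + z) (-z)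
      simp only [add_neg_cancel_right, abs_neg] at this
      linarith
    have h4 : |z| ≤ |s*k + z| := by linarith
    calc z^2 = |z|^2 := (sq_abs z).symm
      _ ≤ |s*k + z|^2 := by nlinarith [abs_nonneg z]
      _ = (s*k + z)^2 := sq_abs _

lemma bdd_grid (s : ℝ) (u : EuclideanSpace ℝ (Fin 2)) :
    BddBelow (Set.range fun k : ℤ × ℤ => ‖gridPt s k + u‖) := by
  refine ⟨0, ?_⟩
  rintro x ⟨k, rfl⟩
  exact norm_nonneg _

lemma gridPt_add_apply (s : ℝ) (k : ℤ × ℤ) (u : EuclideanSpace ℝ (Fin 2)) :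
    (gridPt s k + u) 0 = s * k.1 + u 0 ∧ (gridPt s k + u) 1 = s * k.2 + u 1 := ⟨rfl, rfl⟩

lemma gridPt_zero (s : ℝ) : gridPt s ((0:ℤ), (0:ℤ)) = 0 := by
  ext i
  fin_cases i
  · show s * ((0:ℤ):ℝ) = 0; simp
  · show s * ((0:ℤ):ℝ) = 0; simp

lemma norm_sq_coords (w : EuclideanSpace ℝ (Fin 2)) : ‖w‖^2 = w 0 ^ 2 + w 1 ^ 2 := by
  rw [show ‖w‖ = Real.sqrt (w 0 ^ 2 + w 1 ^ 2) by
      rw [EuclideanSpace.norm_eq]; simp [Fin.sum_univ_two, Real.norm_eq_abs, sq_abs],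
    Real.sq_sqrt (by positivity)]

lemma iInf_grid_eq_norm (s : ℝ) (hs : 0 < s) (u : EuclideanSpace ℝ (Fin 2))
    (hu : u ∈ square s) : (⨅ k : ℤ × ℤ, ‖gridPt s k + u‖) = ‖u‖ := by
  obtain ⟨h0, h1⟩ := hu
  rw [Set.mem_Icc] at h0 h1
  apply le_antisymm
  · calc (⨅ k : ℤ × ℤ, ‖gridPt s k + u‖) ≤ ‖gridPt s (0,0) + u‖ := ciInf_le (bdd_grid s u) _
      _ = ‖u‖ := by rw [gridPt_zero, zero_add]
  · apply le_ciInf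
    intro k
    have hnn : (0:ℝ) ≤ ‖gridPt s k + u‖ := norm_nonneg _
    rw [norm_le_iff' hnn]
    rw [norm_sq_coords (gridPt s k + u),
      (gridPt_add_apply s k u).1, (gridPt_add_apply s k u).2]
    have c0 : (u 0)^2 ≤ (s*k.1 + u 0)^2 := coord_sq_le s (u 0) hs (abs_le.mpr ⟨h0.1, h0.2⟩) k.1
    have c1 : (u 1)^2 ≤ (s*k.2 + u 1)^2 := coord_sq_le s (u 1) hs (abs_le.mpr ⟨h1.1, h1.2⟩) k.2
    linarith

lemma lipschitz_iInf_grid (s : ℝ) :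
    LipschitzWith 1 (fun u : EuclideanSpace ℝ (Fin 2) => ⨅ k : ℤ × ℤ, ‖gridPt s k + u‖) := by
  apply LipschitzWith.of_dist_le_mul
  intro u v
  rw [NNReal.coe_one, one_mul, Real.dist_eq, abs_le]
  have key : ∀ w w' : EuclideanSpace ℝ (Fin 2),
      (⨅ k : ℤ × ℤ, ‖gridPt s k + w‖) ≤ (⨅ k : ℤ × ℤ, ‖gridPt s k + w'‖) + dist w w' := by
    intro w w'
    rw [← sub_le_iff_le_add]
    apply le_ciInf
    intro k
    have h1 : (⨅ k : ℤ × ℤ, ‖gridPt s k + w‖) ≤ ‖gridPt s k + w‖ := ciInf_le (bdd_grid s w) _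
    have h2 : ‖gridPt s k + w‖ ≤ ‖gridPt s k + w'‖ + dist w w' := by
      rw [dist_eq_norm]
      calc ‖gridPt s k + w‖ = ‖(gridPt s k + w') + (w - w')‖ := by congr 1; abel
        _ ≤ ‖gridPt s k + w'‖ + ‖w - w'‖ := norm_add_le _ _
    linarith
  have k1 := key u v
  have k2 := key v u
  rw [dist_comm v u] at k2
  constructor <;> linarith

/-- the CDF `F(r) = ν₂(S₀(s) ∩ B(0,r))/s²` is differentiable with derivative
`2πr/s²` on `(0, s/2)` and `2πr/s² − (8r/s²)·arccos(s/(2r))` on `(s/2, s/√2)`; in particular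
the nearest grid distance `R_g` has probability density `f_{R_g} = gridPDF s`. -/
theorem deriv_gridCDF (s : ℝ) (hs : 0 < s) :
    (∀ r ∈ Set.Ioo 0 (s / 2), HasDerivAt (gridCDF s) (2 * π * r / s ^ 2) r) ∧
    (∀ r ∈ Set.Ioo (s / 2) (s / Real.sqrt 2),
      HasDerivAt (gridCDF s)
        (2 * π * r / s ^ 2 - 8 * r / s ^ 2 * Real.arccos (s / (2 * r))) r) ∧
    (∀ {Ω : Type} [MeasurableSpace Ω] (P : Measure Ω), IsProbabilityMeasure P →
      ∀ (U : Ω → EuclideanSpace ℝ (Fin 2)),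
        Measure.map U P = (volume (square s))⁻¹ • volume.restrict (square s) →
        ∀ (Rg : Ω → ℝ), (∀ ω, Rg ω = ⨅ k : ℤ × ℤ, ‖gridPt s k + U ω‖) →
        ∀ r : ℝ, P {ω | Rg ω ≤ r} = ENNReal.ofReal (∫ t in Set.Iic r, gridPDF s t)) := by
  refine ⟨fun r hr => gridCDF_hasDeriv_low s hs r hr,
          fun r hr => gridCDF_hasDeriv_mid s hs r hr, ?_⟩
  intro Ω _ P hP U hmap Rg hRg r
  rw [setIntegral_Iic_pdf s r hs]
  have hvol : volume (square s) = ENNReal.ofReal (s^2) := volume_square s hs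
  have hs2 : (0:ℝ) < s^2 := by positivity
  have hvolne : ENNReal.ofReal (s^2) ≠ 0 := (ENNReal.ofReal_pos.mpr hs2).ne'
  have hvoltop : ENNReal.ofReal (s^2) ≠ ⊤ := ENNReal.ofReal_ne_top
  have hU : AEMeasurable U P := by
    by_contra hU
    rw [Measure.map_of_not_aemeasurable hU] at hmap
    have h0 : (0 : Measure (EuclideanSpace ℝ (Fin 2))) Set.univ
        = ((volume (square s))⁻¹ • volume.restrict (square s)) Set.univ := by rw [← hmap]
    rw [Measure.smul_apply, Measure.restrict_apply MeasurableSet.univ, Set.univ_inter, hvol,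
      smul_eq_mul, ENNReal.inv_mul_cancel hvolne hvoltop] at h0
    simp at h0
  have hmeasS : MeasurableSet {u : EuclideanSpace ℝ (Fin 2)
      | (⨅ k : ℤ × ℤ, ‖gridPt s k + u‖) ≤ r} := by
    have hm := (lipschitz_iInf_grid s).continuous.measurable
    exact measurableSet_le hm measurable_const
  have hsetEq : {ω | Rg ω ≤ r} = U ⁻¹' {u | (⨅ k : ℤ × ℤ, ‖gridPt s k + u‖) ≤ r} := by
    ext ω
    simp only [Set.mem_setOf_eq, Set.mem_preimage, hRg ω]
  rw [hsetEq, ← Measure.map_apply_of_aemeasurable hU hmeasS, hmap, Measure.smul_apply,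
    Measure.restrict_apply hmeasS, hvol]
  have hinter : {u : EuclideanSpace ℝ (Fin 2) | (⨅ k : ℤ × ℤ, ‖gridPt s k + u‖) ≤ r}
      ∩ square s = square s ∩ Metric.closedBall 0 r := by
    ext u
    simp only [Set.mem_inter_iff, Set.mem_setOf_eq, Metric.mem_closedBall, dist_zero_right]
    constructor
    · rintro ⟨h1, h2⟩
      exact ⟨h2, by rw [← iInf_grid_eq_norm s hs u h2]; exact h1⟩
    · rintro ⟨h1, h2⟩
      exact ⟨by rw [iInf_grid_eq_norm s hs u h1]; exact h2, h1⟩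
  rw [hinter]
  have hfin : volume (square s ∩ Metric.closedBall (0 : EuclideanSpace ℝ (Fin 2)) r) ≠ ⊤ := by
    apply ne_top_of_le_ne_top (hvol ▸ ENNReal.ofReal_ne_top)
    exact measure_mono Set.inter_subset_left
  rw [gridCDF, ENNReal.ofReal_div_of_pos hs2, ENNReal.ofReal_toReal hfin,
    smul_eq_mul, ← ENNReal.div_eq_inv_mul]
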